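/- The TILES set is an unextendable product basis: there is no nonzero product vector a ⊗ b ∈ ℂ³ ⊗ ℂ³ orthogonal to all five TILES vectors ψ₀,…,ψ₄. -/
import Mathlib


open Matrix ComplexOrder

/-- Standard basis vector `|i⟩` of `ℂ³`. -/
noncomputable def e (i : Fin 3) : Fin 3 → ℂ := Pi.single i 1

/-- Tensor product of two vectors of `ℂ³`, as a vector of `ℂ³ ⊗ ℂ³ ≅ ℂ⁹`. -/
def tens (a b : Fin 3 → ℂ) : Fin 3 × Fin 3 → ℂ := fun p => a p.1 * b p.2

/-- The five TILES vectors in `ℂ³ ⊗ ℂ³`. -/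
noncomputable def tiles : Fin 5 → (Fin 3 × Fin 3 → ℂ)
  | 0 => (1 / Real.sqrt 2 : ℝ) • tens (e 0) (e 0 - e 1)
  | 1 => (1 / Real.sqrt 2 : ℝ) • tens (e 0 - e 1) (e 2)
  | 2 => (1 / Real.sqrt 2 : ℝ) • tens (e 2) (e 1 - e 2)
  | 3 => (1 / Real.sqrt 2 : ℝ) • tens (e 1 - e 2) (e 0)
  | 4 => (1 / 3 : ℝ) • tens (e 0 + e 1 + e 2) (e 0 + e 1 + e 2)

lemma key_tiles (A0 A1 A2 B0 B1 B2 : ℂ)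
    (h0 : A0 * (B0 - B1) = 0) (h1 : (A0 - A1) * B2 = 0)
    (h2 : A2 * (B1 - B2) = 0) (h3 : (A1 - A2) * B0 = 0)
    (h4 : (A0 + A1 + A2) * (B0 + B1 + B2) = 0) :
    (A0 = 0 ∧ A1 = 0 ∧ A2 = 0) ∨ (B0 = 0 ∧ B1 = 0 ∧ B2 = 0) := by
  rcases mul_eq_zero.mp h0 with h0' | h0' <;>
  rcases mul_eq_zero.mp h1 with h1' | h1' <;>
  rcases mul_eq_zero.mp h2 with h2' | h2' <;>
  rcases mul_eq_zero.mp h3 with h3' | h3' <;>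
  rcases mul_eq_zero.mp h4 with h4' | h4' <;>
  clear h0 h1 h2 h3 h4 <;>
  (try simp only [sub_eq_zero] at h0' h1' h2' h3') <;>
  subst_vars <;>
  first
  | (left; refine ⟨?_, ?_, ?_⟩ <;>
      first | rfl | linear_combination h4' | linear_combination h4' / 2 | linear_combination h4' / 3)
  | (right; refine ⟨?_, ?_, ?_⟩ <;>
      first | rfl | linear_combination h4' | linear_combination h4' / 2 | linear_combination h4' / 3)

/-- The TILES set is an unextendable product basis: no nonzero product vector is
orthogonal to all five TILES vectors. -/
theorem tiles_unextendable :
    ¬ ∃ a b : Fin 3 → ℂ, a ≠ 0 ∧ b ≠ 0 ∧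
      ∀ i : Fin 5,
        (∑ p : Fin 3 × Fin 3, (starRingEnd ℂ) (tiles i p) * (a p.1 * b p.2)) = 0 := by
  rintro ⟨a, b, ha, hb, h⟩
  have h0 := h 0
  have h1 := h 1
  have h2 := h 2
  have h3 := h 3
  have h4 := h 4
  simp [tiles, tens, e, Fintype.sum_prod_type, Fin.sum_univ_three, Pi.single_apply,
    map_ofNat] at h0 h1 h2 h3 h4
  have hs : (((Real.sqrt 2 : ℝ) : ℂ))⁻¹ ≠ 0 := by
    refine inv_ne_zero (Complex.ofReal_ne_zero.mpr ?_)
    positivity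
  have h3ne : ((3 : ℂ))⁻¹ ≠ 0 := by norm_num
  have e0 : a 0 * (b 0 - b 1) = 0 := by
    rcases mul_eq_zero.mp (show (a 0 * (b 0 - b 1)) * (((Real.sqrt 2 : ℝ) : ℂ))⁻¹ = 0 by
      linear_combination h0) with h | h
    · exact h
    · exact absurd h hs
  have e1 : (a 0 - a 1) * b 2 = 0 := by
    rcases mul_eq_zero.mp (show ((a 0 - a 1) * b 2) * (((Real.sqrt 2 : ℝ) : ℂ))⁻¹ = 0 by
      linear_combination h1) with h | h
    · exact h
    · exact absurd h hs
  have e2 : a 2 * (b 1 - b 2) = 0 := by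
    rcases mul_eq_zero.mp (show (a 2 * (b 1 - b 2)) * (((Real.sqrt 2 : ℝ) : ℂ))⁻¹ = 0 by
      linear_combination h2) with h | h
    · exact h
    · exact absurd h hs
  have e3 : (a 1 - a 2) * b 0 = 0 := by
    rcases mul_eq_zero.mp (show ((a 1 - a 2) * b 0) * (((Real.sqrt 2 : ℝ) : ℂ))⁻¹ = 0 by
      linear_combination h3) with h | h
    · exact h
    · exact absurd h hs
  have e4 : (a 0 + a 1 + a 2) * (b 0 + b 1 + b 2) = 0 := by
    rcases mul_eq_zero.mp (show ((a 0 + a 1 + a 2) * (b 0 + b 1 + b 2)) * ((3 : ℂ))⁻¹ = 0 by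
      linear_combination h4) with h | h
    · exact h
    · exact absurd h h3ne
  rcases key_tiles _ _ _ _ _ _ e0 e1 e2 e3 e4 with ⟨hA0, hA1, hA2⟩ | ⟨hB0, hB1, hB2⟩
  · exact ha (funext fun i => by fin_cases i <;> assumption)
  · exact hb (funext fun i => by fin_cases i <;> assumption)
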